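/- Let G be a finite graph with orientation ε, and A, B finite abelian groups of orders p, q. Then R(G;−p,−q) = (−1)^{r(G)} ∑ (−1)^{|supp g|}, summed over all complementary tension-flows (f,g) ∈ T(G,ε;A) × F(G,ε;B) with supp g = ker f. -/

import Mathlib

/-- `f : E → A` is a tension of the digraph `tl, hd : E → V`: it is the
coboundary of a potential `p : V → A`. -/
def IsTension {V E A : Type} [AddCommGroup A] (tl hd : E → V) (f : E → A) : Prop :=
  ∃ p : V → A, ∀ e, f e = p (tl e) - p (hd e)

/-- `g : E → B` is a flow of the digraph `tl, hd : E → V`: conservation holds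
at every vertex. -/
def IsFlow {V E B : Type} [Fintype E] [DecidableEq V] [AddCommGroup B]
    (tl hd : E → V) (g : E → B) : Prop :=
  ∀ v : V, ∑ e ∈ Finset.univ.filter (fun e => tl e = v), g e
         = ∑ e ∈ Finset.univ.filter (fun e => hd e = v), g e

/-- The rank `r⟨X⟩ = |V| - c⟨X⟩` of the spanning subgraph `(V, X)`, where
`c⟨X⟩` is its number of connected components. -/
noncomputable def grank {V E : Type} [Fintype V] (tl hd : E → V) (X : Finset E) : ℕ :=
  Fintype.card V -
    Nat.card (Quot (fun a b : V =>
      ∃ e ∈ X, (tl e = a ∧ hd e = b) ∨ (tl e = b ∧ hd e = a)))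


open Finset

section Aux
variable {V E : Type} [Fintype V] [Fintype E] [DecidableEq V] [DecidableEq E]
variable (tl hd : E → V)

def grel (X : Finset E) (a b : V) : Prop :=
  ∃ e ∈ X, (tl e = a ∧ hd e = b) ∨ (tl e = b ∧ hd e = a)

noncomputable def gcomp (X : Finset E) : ℕ := Nat.card (Quot (grel tl hd X))


instance (X : Finset E) : Finite (Quot (grel tl hd X)) :=
  Finite.of_surjective (Quot.mk _) Quot.mk_surjective

lemma gcomp_le (X : Finset E) : gcomp tl hd X ≤ Fintype.card V := by
  rw [← Nat.card_eq_fintype_card]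
  exact Nat.card_le_card_of_surjective (Quot.mk _) Quot.mk_surjective

lemma gcomp_mono {X Y : Finset E} (h : X ⊆ Y) : gcomp tl hd Y ≤ gcomp tl hd X := by
  apply Nat.card_le_card_of_surjective
    (Quot.lift (fun v => Quot.mk (grel tl hd Y) v)
      (fun a b hab => Quot.sound (by obtain ⟨e, he, h'⟩ := hab; exact ⟨e, h he, h'⟩)))
  intro c
  obtain ⟨v, rfl⟩ := Quot.exists_rep c
  exact ⟨Quot.mk _ v, rfl⟩

end Aux

set_option linter.unusedSectionVars false

section Tension
variable {V E : Type} [Fintype V] [Fintype E] [DecidableEq V] [DecidableEq E]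
variable (tl hd : E → V)
variable (A : Type) [AddCommGroup A] [Fintype A]

/-- potentials constant on X-components, as a subgroup -/
def pot (X : Finset E) : AddSubgroup (V → A) where
  carrier := {p | ∀ e ∈ X, p (tl e) = p (hd e)}
  zero_mem' := by intro e _; rfl
  add_mem' := by intro a b ha hb e he; simp [ha e he, hb e he]
  neg_mem' := by intro a ha e he; simp [ha e he]

def potEquiv (X : Finset E) : (pot tl hd A X) ≃ (Quot (grel tl hd X) → A) where
  toFun p := Quot.lift p.1 (by
    rintro a b ⟨e, he, ⟨h1, h2⟩ | ⟨h1, h2⟩⟩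
    · rw [← h1, ← h2]; exact p.2 e he
    · rw [← h1, ← h2]; exact (p.2 e he).symm)
  invFun k := ⟨fun v => k (Quot.mk _ v), fun e he => by
    exact congrArg k (Quot.sound ⟨e, he, Or.inl ⟨rfl, rfl⟩⟩)⟩
  left_inv p := rfl
  right_inv k := funext fun c => Quot.inductionOn c (fun v => rfl)

lemma card_pot (X : Finset E) :
    Nat.card (pot tl hd A X) = Fintype.card A ^ gcomp tl hd X := by
  rw [Nat.card_congr (potEquiv tl hd A X), Nat.card_fun, Nat.card_eq_fintype_card]
  rfl

/-- the coboundary homomorphism -/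
def cob : (V → A) →+ (E → A) where
  toFun p := fun e => p (tl e) - p (hd e)
  map_zero' := by funext e; simp
  map_add' p q := by funext e; simp; abel

def cobX (X : Finset E) : (pot tl hd A X) →+ (E → A) :=
  (cob tl hd A).comp (pot tl hd A X).subtype

def cobX_ker_equiv (X : Finset E) :
    (cobX tl hd A X).ker ≃ (pot tl hd A (Finset.univ : Finset E)) where
  toFun x := ⟨x.1.1, by
    intro e _
    have h := congrFun (x.2 : cobX tl hd A X x.1 = 0) e
    simpa [cobX, cob, sub_eq_zero] using h⟩
  invFun p := ⟨⟨p.1, fun e _ => p.2 e (Finset.mem_univ e)⟩, by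
    ext e
    simp [cobX, cob, sub_eq_zero, p.2 e (Finset.mem_univ e)]⟩
  left_inv x := rfl
  right_inv p := rfl

lemma cobX_range (X : Finset E) (f : E → A) :
    f ∈ (cobX tl hd A X).range ↔ (IsTension tl hd f ∧ ∀ e ∈ X, f e = 0) := by
  constructor
  · rintro ⟨⟨p, hp⟩, rfl⟩
    constructor
    · exact ⟨p, fun e => rfl⟩
    · intro e he
      simpa [cobX, cob, sub_eq_zero] using hp e he
  · rintro ⟨⟨p, hp⟩, hz⟩
    refine ⟨⟨p, fun e he => ?_⟩, ?_⟩
    · have := hz e he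
      rw [hp e] at this
      exact sub_eq_zero.mp this
    · ext e
      exact (hp e).symm

lemma tension_count (X : Finset E) :
    Nat.card {f : E → A // IsTension tl hd f ∧ ∀ e ∈ X, f e = 0} *
      Fintype.card A ^ gcomp tl hd (Finset.univ : Finset E)
    = Fintype.card A ^ gcomp tl hd X := by
  have hL := AddSubgroup.card_eq_card_quotient_mul_card_addSubgroup (cobX tl hd A X).ker
  have hiso := Nat.card_congr (QuotientAddGroup.quotientKerEquivRange (cobX tl hd A X)).toEquiv
  have hker := Nat.card_congr (cobX_ker_equiv tl hd A X)
  have hrange : Nat.card (cobX tl hd A X).range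
      = Nat.card {f : E → A // IsTension tl hd f ∧ ∀ e ∈ X, f e = 0} := by
    exact Nat.card_congr (Equiv.subtypeEquivRight (cobX_range tl hd A X))
  rw [← card_pot tl hd A X, ← card_pot tl hd A (Finset.univ : Finset E), ← hker,
    hL, hiso, hrange]

end Tension
section Flow
variable {V E : Type} [Fintype V] [Fintype E] [DecidableEq V] [DecidableEq E]
variable (tl hd : E → V)
variable (B : Type) [AddCommGroup B] [Fintype B]

/-- functions supported in X, as a subgroup -/
def fsup (X : Finset E) : AddSubgroup (E → B) where
  carrier := {g | ∀ e ∉ X, g e = 0}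
  zero_mem' := by intro e _; rfl
  add_mem' := by intro a b ha hb e he; simp [ha e he, hb e he]
  neg_mem' := by intro a ha e he; simp [ha e he]

def fsupEquiv (X : Finset E) : (fsup B X) ≃ ({e // e ∈ X} → B) where
  toFun g e := g.1 e.1
  invFun k := ⟨fun e => if h : e ∈ X then k ⟨e, h⟩ else 0, fun e he => by simp [he]⟩
  left_inv g := by
    ext e
    by_cases h : e ∈ X <;> simp [h]
    exact (g.2 e h).symm
  right_inv k := by ext e; simp

lemma card_fsup (X : Finset E) :
    Nat.card (fsup B X) = Fintype.card B ^ X.card := by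
  rw [Nat.card_congr (fsupEquiv B X), Nat.card_fun, Nat.card_eq_fintype_card,
    Nat.card_eq_fintype_card, Fintype.card_coe]

/-- the boundary homomorphism -/
def bdry : (E → B) →+ (V → B) where
  toFun g := fun v => (∑ e ∈ Finset.univ.filter (fun e => tl e = v), g e)
    - (∑ e ∈ Finset.univ.filter (fun e => hd e = v), g e)
  map_zero' := by funext v; simp
  map_add' g h := by
    funext v
    simp [Finset.sum_add_distrib]
    abel


open Classical in
noncomputable def csum (X : Finset E) : (V → B) →+ (Quot (grel tl hd X) → B) where
  toFun h := fun c => ∑ v ∈ Finset.univ.filter (fun v => Quot.mk _ v = c), h v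
  map_zero' := by funext c; simp
  map_add' g h := by funext c; simp [Finset.sum_add_distrib]

open Classical in
lemma csum_apply (X : Finset E) (h : V → B) (c : Quot (grel tl hd X)) :
    csum tl hd B X h c = ∑ v ∈ Finset.univ.filter (fun v => Quot.mk _ v = c), h v := rfl

open Classical in
lemma csum_surjective (X : Finset E) : Function.Surjective (csum tl hd B X) := by
  classical
  intro k
  refine ⟨fun v => if v = (Quot.mk (grel tl hd X) v).out then k (Quot.mk _ v) else 0, ?_⟩
  funext c
  have : ∀ v ∈ Finset.univ.filter (fun v => Quot.mk (grel tl hd X) v = c),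
      (if v = (Quot.mk (grel tl hd X) v).out then k (Quot.mk (grel tl hd X) v) else 0)
      = (if v = c.out then k c else 0) := by
    intro v hv
    rw [Finset.mem_filter] at hv
    rw [hv.2]
  rw [csum_apply, Finset.sum_congr rfl this, Finset.sum_ite_eq' _ c.out (fun _ => k c)]
  simp [Quot.out_eq]

lemma card_csum_ker (X : Finset E) :
    Nat.card (csum tl hd B X).ker * Fintype.card B ^ gcomp tl hd X
      = Fintype.card B ^ Fintype.card V := by
  have hL := AddSubgroup.card_eq_card_quotient_mul_card_addSubgroup (csum tl hd B X).ker
  have hiso := Nat.card_congr (QuotientAddGroup.quotientKerEquivRange (csum tl hd B X)).toEquiv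
  have hrange : Nat.card (csum tl hd B X).range = Fintype.card B ^ gcomp tl hd X := by
    rw [AddMonoidHom.range_eq_top.mpr (csum_surjective tl hd B X)]
    rw [Nat.card_congr AddSubgroup.topEquiv.toEquiv, Nat.card_fun, Nat.card_eq_fintype_card]
    rfl
  have hV : Nat.card (V → B) = Fintype.card B ^ Fintype.card V := by
    rw [Nat.card_fun, Nat.card_eq_fintype_card, Nat.card_eq_fintype_card]
  rw [← hrange, ← hV, hL, hiso]
  ring
end Flow
section FlowB
variable {V E : Type} [Fintype V] [Fintype E] [DecidableEq V] [DecidableEq E]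
variable (tl hd : E → V)
variable (B : Type) [AddCommGroup B] [Fintype B]

def bdryX (X : Finset E) : (fsup B X : AddSubgroup (E → B)) →+ (V → B) :=
  (bdry tl hd B).comp (fsup B X).subtype

end FlowB
def dip {V B : Type} [DecidableEq V] [AddCommGroup B] (β : B) (a b : V) : V → B :=
  fun v => (if a = v then β else 0) - (if b = v then β else 0)
section Flow3
variable {V E : Type} [Fintype V] [Fintype E] [DecidableEq V] [DecidableEq E]
variable (tl hd : E → V)
variable (B : Type) [AddCommGroup B] [Fintype B]

lemma bdry_single (e : E) (β : B) :
    bdry tl hd B (fun e' => if e' = e then β else 0) = dip β (tl e) (hd e) := by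
  funext v
  show (∑ e' ∈ Finset.univ.filter (fun e' => tl e' = v), (if e' = e then β else 0))
      - (∑ e' ∈ Finset.univ.filter (fun e' => hd e' = v), (if e' = e then β else 0))
      = dip β (tl e) (hd e) v
  rw [Finset.sum_ite_eq' _ e (fun _ => β), Finset.sum_ite_eq' _ e (fun _ => β)]
  simp [dip]

lemma dip_mem (X : Finset E) (a b : V) (h : Relation.EqvGen (grel tl hd X) a b) (β : B) :
    dip β a b ∈ (bdryX tl hd B X).range := by
  induction h with
  | rel a b hab =>
    obtain ⟨e, he, ⟨h1, h2⟩ | ⟨h1, h2⟩⟩ := hab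
    · subst h1; subst h2
      exact ⟨⟨fun e' => if e' = e then β else 0, fun e' he' => by
        simp only [ite_eq_right_iff]; rintro rfl; exact absurd he he'⟩,
        bdry_single tl hd B e β⟩
    · subst h1; subst h2
      have hmem : dip β (tl e) (hd e) ∈ (bdryX tl hd B X).range :=
        ⟨⟨fun e' => if e' = e then β else 0, fun e' he' => by
          simp only [ite_eq_right_iff]; rintro rfl; exact absurd he he'⟩,
          bdry_single tl hd B e β⟩
      have : dip β (hd e) (tl e) = -dip β (tl e) (hd e) :=
        funext fun v => (neg_sub _ _).symm
      rw [this]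
      exact neg_mem hmem
  | refl a =>
    have : dip β a a = 0 := funext fun v => sub_self _
    rw [this]; exact zero_mem _
  | symm a b _ ih =>
    have : dip β b a = -dip β a b := funext fun v => (neg_sub _ _).symm
    rw [this]; exact neg_mem ih
  | trans a b c _ _ ih1 ih2 =>
    have : dip β a c = dip β a b + dip β b c :=
      funext fun v => (sub_add_sub_cancel _ _ _).symm
    rw [this]; exact add_mem ih1 ih2

open Classical in
lemma range_bdryX (X : Finset E) :
    (bdryX tl hd B X).range = (csum tl hd B X).ker := by
  ext h
  constructor
  · rintro ⟨⟨g, hg⟩, rfl⟩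
    rw [AddMonoidHom.mem_ker]
    funext c
    rw [csum_apply]
    show (∑ v ∈ Finset.univ.filter (fun v => Quot.mk _ v = c),
      bdry tl hd B g v) = 0
    set s := Finset.univ.filter (fun v => Quot.mk (grel tl hd X) v = c) with hs
    have hb : ∀ v, bdry tl hd B g v
        = (∑ e ∈ Finset.univ.filter (fun e => tl e = v), g e)
        - (∑ e ∈ Finset.univ.filter (fun e => hd e = v), g e) := fun _ => rfl
    have swap : ∀ t : E → V, (∑ v ∈ s, ∑ e ∈ Finset.univ.filter (fun e => t e = v), g e)
        = ∑ e : E, if t e ∈ s then g e else 0 := by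
      intro t
      calc (∑ v ∈ s, ∑ e ∈ Finset.univ.filter (fun e => t e = v), g e)
          = ∑ v ∈ s, ∑ e : E, if t e = v then g e else 0 := by simp_rw [Finset.sum_filter]
        _ = ∑ e : E, ∑ v ∈ s, if t e = v then g e else 0 := Finset.sum_comm
        _ = ∑ e : E, if t e ∈ s then g e else 0 := by simp_rw [Finset.sum_ite_eq]
    simp_rw [hb, Finset.sum_sub_distrib, swap, ← Finset.sum_sub_distrib]
    apply Finset.sum_eq_zero
    intro e _
    by_cases hge : g e = 0
    · simp [hge]
    · have heX : e ∈ X := by by_contra hx; exact hge (hg e hx)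
      have hq : Quot.mk (grel tl hd X) (tl e) = Quot.mk (grel tl hd X) (hd e) :=
        Quot.sound ⟨e, heX, Or.inl ⟨rfl, rfl⟩⟩
      simp [hs, Finset.mem_filter, hq]
  · intro hker
    rw [AddMonoidHom.mem_ker] at hker
    set rep : V → V := fun v => (Quot.mk (grel tl hd X) v).out with hrep
    have hrepmk : ∀ v, Quot.mk (grel tl hd X) (rep v) = Quot.mk (grel tl hd X) v :=
      fun v => Quot.out_eq _
    have key : h = ∑ v : V, dip (h v) v (rep v) := by
      funext w
      rw [Finset.sum_apply]
      have : ∀ v : V, dip (h v) v (rep v) w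
          = (if v = w then h v else 0) - (if rep v = w then h v else 0) := fun v => rfl
      simp_rw [this, Finset.sum_sub_distrib]
      rw [Finset.sum_ite_eq' _ w (fun v => h v)]
      have hS : (∑ v : V, if rep v = w then h v else 0) = 0 := by
        rw [← Finset.sum_filter]
        by_cases hw : rep w = w
        · have hfil : Finset.univ.filter (fun v => rep v = w)
              = Finset.univ.filter (fun v => Quot.mk (grel tl hd X) v
                = Quot.mk (grel tl hd X) w) := by
            apply Finset.filter_congr
            intro v _
            constructor
            · intro hv
              rw [← hrepmk v, hv, ← hw, hrepmk w]
            · intro hv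
              show (Quot.mk (grel tl hd X) v).out = w
              rw [hv]; exact hw
          rw [hfil, ← csum_apply tl hd B X h, hker]
          rfl
        · have hfil : Finset.univ.filter (fun v => rep v = w) = ∅ := by
            rw [Finset.filter_eq_empty_iff]
            intro v _ hv
            apply hw
            show (Quot.mk (grel tl hd X) w).out = w
            rw [← hv, hrepmk v, hv]
            exact hv
          rw [hfil, Finset.sum_empty]
      rw [hS, sub_zero]
      simp
    rw [key]
    apply sum_mem
    intro v _
    exact dip_mem tl hd B X v (rep v)
      (Quot.eqvGen_exact (by rw [hrepmk v])) (h v)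

open Classical in
lemma flow_count (X : Finset E) :
    Nat.card {g : E → B // IsFlow tl hd g ∧ ∀ e ∉ X, g e = 0}
      * Fintype.card B ^ Fintype.card V
    = Fintype.card B ^ (X.card + gcomp tl hd X) := by
  have hL := AddSubgroup.card_eq_card_quotient_mul_card_addSubgroup (bdryX tl hd B X).ker
  have hiso := Nat.card_congr (QuotientAddGroup.quotientKerEquivRange (bdryX tl hd B X)).toEquiv
  have h2 : Nat.card (bdryX tl hd B X).range * Fintype.card B ^ gcomp tl hd X
      = Fintype.card B ^ Fintype.card V := by
    rw [range_bdryX]; exact card_csum_ker tl hd B X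
  have hker : Nat.card (bdryX tl hd B X).ker
      = Nat.card {g : E → B // IsFlow tl hd g ∧ ∀ e ∉ X, g e = 0} := by
    apply Nat.card_congr
    refine ⟨fun x => ⟨x.1.1, ⟨fun v => ?_, x.1.2⟩⟩,
      fun g => ⟨⟨g.1, g.2.2⟩, ?_⟩, fun x => rfl, fun g => rfl⟩
    · have := congrFun (AddMonoidHom.mem_ker.mp x.2) v
      exact sub_eq_zero.mp this
    · rw [AddMonoidHom.mem_ker]
      funext v
      exact sub_eq_zero.mpr (g.2.1 v)
  calc Nat.card {g : E → B // IsFlow tl hd g ∧ ∀ e ∉ X, g e = 0}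
      * Fintype.card B ^ Fintype.card V
      = Nat.card (bdryX tl hd B X).ker
        * (Nat.card (bdryX tl hd B X).range * Fintype.card B ^ gcomp tl hd X) := by
        rw [h2, hker]
    _ = (Nat.card ((fsup B X : AddSubgroup (E → B)) ⧸ (bdryX tl hd B X).ker)
        * Nat.card (bdryX tl hd B X).ker) * Fintype.card B ^ gcomp tl hd X := by
        rw [hiso]; ring
    _ = Fintype.card B ^ X.card * Fintype.card B ^ gcomp tl hd X := by
        rw [← hL, card_fsup]
    _ = Fintype.card B ^ (X.card + gcomp tl hd X) := by rw [pow_add]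

end Flow3
section Counts

lemma nat_sub_helper1 (n cu cX : ℕ) (h1 : cu ≤ cX) (h2 : cX ≤ n) :
    (n - cu) - (n - cX) = cX - cu := by omega

lemma nat_sub_helper2 (a n c : ℕ) (h2 : c ≤ n) (h3 : n ≤ a + c) :
    a - (n - c) = a + c - n := by omega

variable {V E : Type} [Fintype V] [Fintype E] [DecidableEq V] [DecidableEq E]
variable (tl hd : E → V)

lemma grank_le_card (X : Finset E) :
    Fintype.card V ≤ X.card + gcomp tl hd X := by
  have h := flow_count tl hd (ZMod 2) X
  rw [ZMod.card 2] at h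
  have hdvd : (2:ℕ) ^ Fintype.card V ∣ 2 ^ (X.card + gcomp tl hd X) :=
    ⟨Nat.card {g : E → ZMod 2 // IsFlow tl hd g ∧ ∀ e ∉ X, g e = 0}, by rw [← h]; ring⟩
  exact (Nat.pow_dvd_pow_iff_le_right (by norm_num)).mp hdvd

lemma NT_eq (A : Type) [AddCommGroup A] [Fintype A] (X : Finset E) :
    Nat.card {f : E → A // IsTension tl hd f ∧ ∀ e ∈ X, f e = 0}
      = Fintype.card A ^ (grank tl hd Finset.univ - grank tl hd X) := by
  have h := tension_count tl hd A X
  have h1 : gcomp tl hd (Finset.univ : Finset E) ≤ gcomp tl hd X :=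
    gcomp_mono tl hd (Finset.subset_univ X)
  have h2 : gcomp tl hd X ≤ Fintype.card V := gcomp_le tl hd X
  have hexp : grank tl hd (Finset.univ : Finset E) - grank tl hd X
      = gcomp tl hd X - gcomp tl hd (Finset.univ : Finset E) :=
    nat_sub_helper1 _ _ _ h1 h2
  apply Nat.eq_of_mul_eq_mul_right
    (pow_pos (Fintype.card_pos (α := A)) (gcomp tl hd (Finset.univ : Finset E)))
  rw [h, hexp, ← pow_add, Nat.sub_add_cancel h1]

lemma NF_eq (B : Type) [AddCommGroup B] [Fintype B] (X : Finset E) :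
    Nat.card {g : E → B // IsFlow tl hd g ∧ ∀ e ∉ X, g e = 0}
      = Fintype.card B ^ (X.card - grank tl hd X) := by
  have h := flow_count tl hd B X
  have h2 : gcomp tl hd X ≤ Fintype.card V := gcomp_le tl hd X
  have h3 := grank_le_card tl hd X
  have hexp : X.card - grank tl hd X
      = X.card + gcomp tl hd X - Fintype.card V :=
    nat_sub_helper2 _ _ _ h2 h3
  apply Nat.eq_of_mul_eq_mul_right (pow_pos (Fintype.card_pos (α := B)) (Fintype.card V))
  rw [h, hexp, ← pow_add, Nat.sub_add_cancel h3]

lemma grank_le_grank_univ (X : Finset E) :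
    grank tl hd X ≤ grank tl hd Finset.univ :=
  Nat.sub_le_sub_left (gcomp_mono tl hd (Finset.subset_univ X)) (Fintype.card V)

lemma grank_le_card' (X : Finset E) : grank tl hd X ≤ X.card :=
  Nat.sub_le_iff_le_add.mpr (grank_le_card tl hd X)

end Counts
lemma interval_sum {E : Type} [Fintype E] [DecidableEq E] (S T : Finset E) :
    (∑ X : Finset E, if S ⊆ X ∧ X ⊆ T then (-1:ℤ)^X.card else 0)
    = if S = T then (-1:ℤ)^S.card else 0 := by
  by_cases hST : S ⊆ T
  · rw [← Finset.sum_filter]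
    have hdisj : ∀ Y : Finset E, Y ⊆ T \ S → Disjoint S Y := fun Y hY =>
      (Finset.disjoint_of_subset_right hY Finset.sdiff_disjoint.symm)
    have himg : Finset.univ.filter (fun X => S ⊆ X ∧ X ⊆ T)
        = (T \ S).powerset.image (fun Y => S ∪ Y) := by
      ext X
      simp only [Finset.mem_filter, Finset.mem_univ, true_and, Finset.mem_image,
        Finset.mem_powerset]
      constructor
      · rintro ⟨h1, h2⟩
        refine ⟨X \ S, ?_, by rw [Finset.union_sdiff_of_subset h1]⟩
        intro a ha
        rw [Finset.mem_sdiff] at ha ⊢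
        exact ⟨h2 ha.1, ha.2⟩
      · rintro ⟨Y, hY, rfl⟩
        exact ⟨Finset.subset_union_left, Finset.union_subset hST
          (hY.trans Finset.sdiff_subset)⟩
    have hinj : ∀ Y ∈ (T \ S).powerset, ∀ Z ∈ (T \ S).powerset,
        S ∪ Y = S ∪ Z → Y = Z := by
      intro Y hY Z hZ h
      rw [Finset.mem_powerset] at hY hZ
      have e1 := Finset.union_sdiff_cancel_left (hdisj Y hY)
      have e2 := Finset.union_sdiff_cancel_left (hdisj Z hZ)
      rw [← e1, ← e2, h]
    rw [himg, Finset.sum_image hinj]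
    have hterm : ∀ Y ∈ (T \ S).powerset,
        (-1:ℤ)^(S ∪ Y).card = (-1:ℤ)^S.card * (-1:ℤ)^Y.card := by
      intro Y hY
      rw [Finset.mem_powerset] at hY
      rw [Finset.card_union_of_disjoint (hdisj Y hY), pow_add]
    rw [Finset.sum_congr rfl hterm, ← Finset.mul_sum,
      Finset.sum_powerset_neg_one_pow_card]
    have hiff : T \ S = ∅ ↔ S = T := by
      rw [Finset.sdiff_eq_empty_iff_subset]
      exact ⟨fun h => Finset.Subset.antisymm hST h, fun h => h ▸ Finset.Subset.refl _⟩
    rw [if_congr hiff rfl rfl]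
    split_ifs <;> ring
  · rw [if_neg (fun h : S = T => hST (h ▸ Finset.Subset.refl S))]
    apply Finset.sum_eq_zero
    intro X _
    rw [if_neg]
    rintro ⟨h1, h2⟩
    exact hST (h1.trans h2)

lemma nat_parity_helper (a b c : ℕ) (ha : c ≤ a) (hb : c ≤ b) :
    (a - c) + (b - c) + 2 * c = a + b := by omega

open Classical in
/-- `R(G;-p,-q) = (-1)^{r(G)} ∑ (-1)^{|supp g|}`, summed over all complementary
tension-flows `(f,g)` (those with `supp g = ker f`) with values in finite
abelian groups `A, B` of orders `p, q`. -/
theorem stmt10 {V E A B : Type} [Fintype V] [Fintype E] [DecidableEq V] [DecidableEq E]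
    [AddCommGroup A] [Fintype A] [AddCommGroup B] [Fintype B]
    (tl hd : E → V) (p q : ℕ) (hp : Fintype.card A = p) (hq : Fintype.card B = q) :
    ∑ X : Finset E, (-(p : ℤ)) ^ (grank tl hd Finset.univ - grank tl hd X) *
        (-(q : ℤ)) ^ (X.card - grank tl hd X)
    = (-1 : ℤ) ^ (grank tl hd (Finset.univ : Finset E)) *
      ∑ fg ∈ Finset.univ.filter (fun fg : (E → A) × (E → B) =>
          IsTension tl hd fg.1 ∧ IsFlow tl hd fg.2 ∧
          ∀ e : E, fg.2 e ≠ 0 ↔ fg.1 e = 0),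
        (-1 : ℤ) ^ (Finset.univ.filter (fun e => fg.2 e ≠ 0)).card := by
  classical
  subst hp; subst hq
  set r := grank tl hd (Finset.univ : Finset E) with hr
  -- the condition for a pair and a subset X
  set P : Finset E → (E → A) × (E → B) → Prop := fun X fg =>
    (IsTension tl hd fg.1 ∧ ∀ e ∈ X, fg.1 e = 0) ∧
    (IsFlow tl hd fg.2 ∧ ∀ e ∉ X, fg.2 e = 0) with hP
  -- Step 1: termwise identification of the Whitney term with a signed count
  have step1 : ∀ X : Finset E,
      (-(Fintype.card A : ℤ)) ^ (r - grank tl hd X) *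
        (-(Fintype.card B : ℤ)) ^ (X.card - grank tl hd X)
      = (-1:ℤ) ^ (r + X.card) *
        ∑ fg : (E → A) × (E → B), (if P X fg then (1:ℤ) else 0) := by
    intro X
    have ha : grank tl hd X ≤ r := grank_le_grank_univ tl hd X
    have hb : grank tl hd X ≤ X.card := grank_le_card' tl hd X
    -- the count of pairs
    have hcount : (∑ fg : (E → A) × (E → B), (if P X fg then (1:ℤ) else 0))
        = ((Nat.card {f : E → A // IsTension tl hd f ∧ ∀ e ∈ X, f e = 0} *
            Nat.card {g : E → B // IsFlow tl hd g ∧ ∀ e ∉ X, g e = 0} : ℕ) : ℤ) := by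
      rw [Nat.card_eq_fintype_card, Nat.card_eq_fintype_card,
        Fintype.card_subtype, Fintype.card_subtype]
      rw [← Finset.card_product]
      have hprod : (Finset.univ.filter (fun f : E → A =>
            IsTension tl hd f ∧ ∀ e ∈ X, f e = 0)) ×ˢ
          (Finset.univ.filter (fun g : E → B =>
            IsFlow tl hd g ∧ ∀ e ∉ X, g e = 0))
          = Finset.univ.filter (fun fg : (E → A) × (E → B) => P X fg) := by
        ext fg
        simp only [Finset.mem_product, Finset.mem_filter, Finset.mem_univ, true_and, hP]
      rw [hprod, Finset.card_filter]
      push_cast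
      rfl
    rw [hcount, NT_eq tl hd A X, NF_eq tl hd B X]
    have hsign : (-1:ℤ) ^ (r - grank tl hd X) * (-1:ℤ) ^ (X.card - grank tl hd X)
        = (-1:ℤ) ^ (r + X.card) := by
      have hparity : (r - grank tl hd X) + (X.card - grank tl hd X)
          + 2 * grank tl hd X = r + X.card :=
        nat_parity_helper _ _ _ ha hb
      have h2 : (-1:ℤ) ^ ((r - grank tl hd X) + (X.card - grank tl hd X)
            + 2 * grank tl hd X)
          = (-1:ℤ) ^ ((r - grank tl hd X) + (X.card - grank tl hd X)) := by
        rw [pow_add ((-1:ℤ)) ((r - grank tl hd X) + (X.card - grank tl hd X))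
          (2 * grank tl hd X), pow_mul]
        norm_num
      rw [← pow_add, ← hparity, h2]
    calc (-(Fintype.card A : ℤ)) ^ (r - grank tl hd X) *
          (-(Fintype.card B : ℤ)) ^ (X.card - grank tl hd X)
        = ((-1:ℤ) ^ (r - grank tl hd X) * (Fintype.card A : ℤ) ^ (r - grank tl hd X)) *
          ((-1:ℤ) ^ (X.card - grank tl hd X) *
            (Fintype.card B : ℤ) ^ (X.card - grank tl hd X)) := by
          rw [neg_pow (Fintype.card A : ℤ), neg_pow (Fintype.card B : ℤ)]
      _ = ((-1:ℤ) ^ (r - grank tl hd X) * (-1:ℤ) ^ (X.card - grank tl hd X)) *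
          ((Fintype.card A : ℤ) ^ (r - grank tl hd X) *
            (Fintype.card B : ℤ) ^ (X.card - grank tl hd X)) := by ring
      _ = (-1:ℤ) ^ (r + X.card) *
          ((Fintype.card A : ℤ) ^ (r - grank tl hd X) *
            (Fintype.card B : ℤ) ^ (X.card - grank tl hd X)) := by rw [hsign]
      _ = (-1:ℤ) ^ (r + X.card) *
          ((Fintype.card A ^ (r - grank tl hd X) *
            Fintype.card B ^ (X.card - grank tl hd X) : ℕ) : ℤ) := by push_cast; ring
  -- Step 2: the inner alternating sum over X for a fixed pair
  have inner : ∀ fg : (E → A) × (E → B),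
      (∑ X : Finset E, if P X fg then (-1:ℤ)^X.card else 0)
      = if (IsTension tl hd fg.1 ∧ IsFlow tl hd fg.2 ∧
          ∀ e : E, fg.2 e ≠ 0 ↔ fg.1 e = 0) then
          (-1:ℤ) ^ (Finset.univ.filter (fun e => fg.2 e ≠ 0)).card
        else 0 := by
    intro fg
    set Sg := Finset.univ.filter (fun e => fg.2 e ≠ 0) with hSg
    set Kf := Finset.univ.filter (fun e => fg.1 e = 0) with hKf
    have hc : ∀ X : Finset E, P X fg ↔
        ((IsTension tl hd fg.1 ∧ IsFlow tl hd fg.2) ∧ (Sg ⊆ X ∧ X ⊆ Kf)) := by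
      intro X
      have h1 : (∀ e ∈ X, fg.1 e = 0) ↔ X ⊆ Kf := by
        simp only [hKf, Finset.subset_iff, Finset.mem_filter, Finset.mem_univ, true_and]
      have h2 : (∀ e ∉ X, fg.2 e = 0) ↔ Sg ⊆ X := by
        simp only [hSg, Finset.subset_iff, Finset.mem_filter, Finset.mem_univ, true_and]
        constructor
        · intro h e hg
          by_contra hx
          exact hg (h e hx)
        · intro h e hx
          by_contra hg
          exact hx (h hg)
      rw [hP]
      constructor
      · rintro ⟨⟨hT, hz⟩, ⟨hF, hs⟩⟩
        exact ⟨⟨hT, hF⟩, ⟨h2.mp hs, h1.mp hz⟩⟩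
      · rintro ⟨⟨hT, hF⟩, ⟨hs, hz⟩⟩
        exact ⟨⟨hT, h1.mpr hz⟩, ⟨hF, h2.mpr hs⟩⟩
    have hSK : Sg = Kf ↔ (∀ e : E, fg.2 e ≠ 0 ↔ fg.1 e = 0) := by
      simp only [Finset.ext_iff, hSg, hKf, Finset.mem_filter, Finset.mem_univ, true_and]
    calc (∑ X : Finset E, if P X fg then (-1:ℤ)^X.card else 0)
        = ∑ X : Finset E, if ((IsTension tl hd fg.1 ∧ IsFlow tl hd fg.2) ∧
            (Sg ⊆ X ∧ X ⊆ Kf)) then (-1:ℤ)^X.card else 0 := by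
          apply Finset.sum_congr rfl
          intro X _
          rw [if_congr (hc X) rfl rfl]
      _ = if (IsTension tl hd fg.1 ∧ IsFlow tl hd fg.2) then
            (∑ X : Finset E, if Sg ⊆ X ∧ X ⊆ Kf then (-1:ℤ)^X.card else 0) else 0 := by
          by_cases hTF : IsTension tl hd fg.1 ∧ IsFlow tl hd fg.2
          · rw [if_pos hTF]
            apply Finset.sum_congr rfl
            intro X _
            simp only [hTF, true_and]
          · rw [if_neg hTF]
            apply Finset.sum_eq_zero
            intro X _
            rw [if_neg (fun h => hTF h.1)]
      _ = if (IsTension tl hd fg.1 ∧ IsFlow tl hd fg.2) then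
            (if Sg = Kf then (-1:ℤ)^Sg.card else 0) else 0 := by
          rw [interval_sum]
      _ = if (IsTension tl hd fg.1 ∧ IsFlow tl hd fg.2 ∧
            ∀ e : E, fg.2 e ≠ 0 ↔ fg.1 e = 0) then (-1:ℤ) ^ Sg.card else 0 := by
          by_cases hTF : IsTension tl hd fg.1 ∧ IsFlow tl hd fg.2
          · by_cases hS : Sg = Kf
            · rw [if_pos hTF, if_pos hS, if_pos ⟨hTF.1, hTF.2, hSK.mp hS⟩]
            · rw [if_pos hTF, if_neg hS, if_neg]
              rintro ⟨-, -, h⟩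
              exact hS (hSK.mpr h)
          · rw [if_neg hTF, if_neg]
            rintro ⟨h1, h2, -⟩
            exact hTF ⟨h1, h2⟩
  -- assemble
  rw [Finset.sum_filter]
  calc ∑ X : Finset E, (-(Fintype.card A : ℤ)) ^ (r - grank tl hd X) *
        (-(Fintype.card B : ℤ)) ^ (X.card - grank tl hd X)
      = ∑ X : Finset E, (-1:ℤ) ^ (r + X.card) *
          ∑ fg : (E → A) × (E → B), (if P X fg then (1:ℤ) else 0) := by
        exact Finset.sum_congr rfl (fun X _ => step1 X)
    _ = ∑ X : Finset E, ∑ fg : (E → A) × (E → B),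
          (-1:ℤ) ^ r * (if P X fg then (-1:ℤ)^X.card else 0) := by
        apply Finset.sum_congr rfl
        intro X _
        rw [Finset.mul_sum]
        apply Finset.sum_congr rfl
        intro fg _
        rw [pow_add]
        by_cases h : P X fg
        · rw [if_pos h, if_pos h]; ring
        · rw [if_neg h, if_neg h]; ring
    _ = ∑ fg : (E → A) × (E → B), ∑ X : Finset E,
          (-1:ℤ) ^ r * (if P X fg then (-1:ℤ)^X.card else 0) := Finset.sum_comm
    _ = (-1:ℤ) ^ r * ∑ fg : (E → A) × (E → B),
          (∑ X : Finset E, if P X fg then (-1:ℤ)^X.card else 0) := by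
        rw [Finset.mul_sum]
        apply Finset.sum_congr rfl
        intro fg _
        rw [Finset.mul_sum]
    _ = (-1:ℤ) ^ r * ∑ fg : (E → A) × (E → B),
          (if (IsTension tl hd fg.1 ∧ IsFlow tl hd fg.2 ∧
            ∀ e : E, fg.2 e ≠ 0 ↔ fg.1 e = 0) then
            (-1:ℤ) ^ (Finset.univ.filter (fun e => fg.2 e ≠ 0)).card
          else 0) := by
        rw [Finset.sum_congr rfl (fun fg _ => inner fg)]
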